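/- Let p ∈ M_d(ℂ⟨x₁,…,xₙ⟩)_h, let B₁,…,B_m ∈ M_d(ℂ)_h span an indefinite subspace of the Hermitian matrices (every nonzero real linear combination is indefinite), and fix a Hilbert space H and self-adjoint T₁,…,Tₙ ∈ B(H). If there exist self-adjoint S₁,…,S_m ∈ B(H) with p(T₁,…,Tₙ) + ∑ᵢ Bᵢ ⊗ Sᵢ ≥ 0, then for all r ≤ dim H and all W₁,…,W_N ∈ M_{d,r}(ℂ) with ∑_j W_j* Bᵢ W_j = 0 for all i, one has ∑_j p_{W_j}(T₁,…,Tₙ) ≥ 0. -/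

import Mathlib

open Matrix
open scoped ComplexOrder

noncomputable section

/-- A free matrix polynomial of size `d` in `n` Hermitian variables:
a finitely supported assignment of a coefficient matrix to each word. -/
abbrev FreePoly (n d : ℕ) := (List (Fin n)) →₀ Matrix (Fin d) (Fin d) ℂ

/-- Evaluation of a word at a tuple of operators. -/
def wordEval {n : ℕ} {H : Type*} [NormedAddCommGroup H] [InnerProductSpace ℂ H]
    (T : Fin n → H →L[ℂ] H) : List (Fin n) → (H →L[ℂ] H)
  | [] => 1
  | i :: w => T i * wordEval T w

/-- Evaluation of a free matrix polynomial at operators `T`, as a `d×d` matrix of operators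
(representing an operator on `ℂ^d ⊗ H`). -/
def evalOp {n d : ℕ} {H : Type*} [NormedAddCommGroup H] [InnerProductSpace ℂ H]
    (p : FreePoly n d) (T : Fin n → H →L[ℂ] H) :
    Matrix (Fin d) (Fin d) (H →L[ℂ] H) :=
  Matrix.of fun i j => ∑ w ∈ p.support, (p w i j) • wordEval T w

/-- The polynomial `p_W = ∑_ω Wᴴ P_ω W ⊗ ω` for `W ∈ M_{d,r}(ℂ)`. -/
def compressPoly {n d r : ℕ} (p : FreePoly n d) (W : Matrix (Fin d) (Fin r) ℂ) :
    FreePoly n r :=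
  Finsupp.mapRange (fun P => Wᴴ * P * W) (by simp) p

/-- The Kronecker product `B ⊗ S` as a matrix of operators. -/
def kron {d : ℕ} {H : Type*} [NormedAddCommGroup H] [InnerProductSpace ℂ H]
    (B : Matrix (Fin d) (Fin d) ℂ) (S : H →L[ℂ] H) :
    Matrix (Fin d) (Fin d) (H →L[ℂ] H) :=
  Matrix.of fun i j => (B i j) • S

/-- A matrix of operators is positive semidefinite (as an operator on `ℂ^d ⊗ H`). -/
def OpMatNonneg {d : ℕ} {H : Type*} [NormedAddCommGroup H] [InnerProductSpace ℂ H]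
    (M : Matrix (Fin d) (Fin d) (H →L[ℂ] H)) : Prop :=
  ∀ v : Fin d → H, 0 ≤ (∑ i, ∑ j, (inner ℂ (M i j (v j)) (v i) : ℂ)).re

/-- A matrix of operators is bounded below by `ε · id` (as an operator on `ℂ^d ⊗ H`). -/
def OpMatGe {d : ℕ} {H : Type*} [NormedAddCommGroup H] [InnerProductSpace ℂ H]
    (ε : ℝ) (M : Matrix (Fin d) (Fin d) (H →L[ℂ] H)) : Prop :=
  ∀ v : Fin d → H, ε * ∑ i, ‖v i‖ ^ 2 ≤ (∑ i, ∑ j, (inner ℂ (M i j (v j)) (v i) : ℂ)).re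

/-- A free matrix polynomial is Hermitian: `p* = p`, i.e. `(P_ω)ᴴ = P_{ω reversed}`. -/
def FreePoly.IsHermitian {n d : ℕ} (p : FreePoly n d) : Prop :=
  ∀ w : List (Fin n), (p w)ᴴ = p w.reverse

end


noncomputable section AuxEasyDir

variable {H : Type*} [NormedAddCommGroup H] [InnerProductSpace ℂ H]

private lemma sum_rot' {M : Type*} [AddCommMonoid M] {α β γ : Type*} (s : Finset α)
    (t : Finset β) (u : Finset γ) (f : α → β → γ → M) :
    ∑ a ∈ s, ∑ b ∈ t, ∑ c ∈ u, f a b c = ∑ c ∈ u, ∑ a ∈ s, ∑ b ∈ t, f a b c := by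
  trans ∑ a ∈ s, ∑ c ∈ u, ∑ b ∈ t, f a b c
  · exact Finset.sum_congr rfl fun a _ => Finset.sum_comm
  · exact Finset.sum_comm

private lemma sum4_swap' {M : Type*} [AddCommMonoid M] {α β γ δ : Type*}
    [Fintype α] [Fintype β] [Fintype γ] [Fintype δ] (f : α → β → γ → δ → M) :
    ∑ a, ∑ b, ∑ c, ∑ d_, f a b c d_ = ∑ c, ∑ d_, ∑ a, ∑ b, f a b c d_ := by
  trans ∑ c, ∑ a, ∑ b, ∑ d_, f a b c d_
  · exact sum_rot' _ _ _ _
  · exact Finset.sum_congr rfl fun c _ => sum_rot' _ _ _ _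

/-- The sesquilinear quadratic form of a matrix of operators. -/
private def Qf {k : ℕ} (M : Matrix (Fin k) (Fin k) (H →L[ℂ] H)) (v : Fin k → H) : ℂ :=
  ∑ i, ∑ j, inner ℂ (M i j (v j)) (v i)

private lemma Qf_sum {k : ℕ} {ι : Type*} (s : Finset ι)
    (M : ι → Matrix (Fin k) (Fin k) (H →L[ℂ] H)) (v : Fin k → H) :
    Qf (∑ j ∈ s, M j) v = ∑ j ∈ s, Qf (M j) v := by
  simp only [Qf, Matrix.sum_apply, ContinuousLinearMap.sum_apply, sum_inner]
  exact sum_rot' _ _ _ _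

private lemma Qf_add {k : ℕ} (M M' : Matrix (Fin k) (Fin k) (H →L[ℂ] H)) (v : Fin k → H) :
    Qf (M + M') v = Qf M v + Qf M' v := by
  simp [Qf, Matrix.add_apply, inner_add_left, Finset.sum_add_distrib]

private lemma Qf_poly {n d : ℕ} (p : FreePoly n d) (T : Fin n → H →L[ℂ] H) (u : Fin d → H) :
    Qf (evalOp p T) u = ∑ w ∈ p.support, ∑ a, ∑ b,
      (starRingEnd ℂ) (p w a b) * inner ℂ (wordEval T w (u b)) (u a) := by
  simp only [Qf, evalOp, Matrix.of_apply, ContinuousLinearMap.sum_apply,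
    ContinuousLinearMap.smul_apply, sum_inner, inner_smul_left]
  exact sum_rot' _ _ _ _

private lemma Qf_core {d r : ℕ} (P : Matrix (Fin d) (Fin d) ℂ) (A : H →L[ℂ] H)
    (W : Matrix (Fin d) (Fin r) ℂ) (v : Fin r → H) :
    ∑ a, ∑ b, (starRingEnd ℂ) (P a b) *
        (inner ℂ (A (∑ t, W b t • v t)) (∑ s, W a s • v s) : ℂ)
      = ∑ s, ∑ t, (starRingEnd ℂ) ((Wᴴ * P * W) s t) * inner ℂ (A (v t)) (v s) := by
  simp only [inner_sum, sum_inner, inner_smul_left, inner_smul_right, map_sum,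
    ContinuousLinearMap.map_smul, Matrix.mul_apply, conjTranspose_apply, Finset.sum_mul,
    Finset.mul_sum, _root_.map_mul, starRingEnd_apply, star_star]
  rw [sum4_swap']
  refine Finset.sum_congr rfl fun s _ => Finset.sum_congr rfl fun t _ => ?_
  rw [Finset.sum_comm]
  refine Finset.sum_congr rfl fun b _ => Finset.sum_congr rfl fun a _ => ?_
  ring

private lemma Qf_compress {n d r : ℕ} (p : FreePoly n d) (T : Fin n → H →L[ℂ] H)
    (W : Matrix (Fin d) (Fin r) ℂ) (v : Fin r → H) :
    Qf (evalOp (compressPoly p W) T) v = Qf (evalOp p T) (fun a => ∑ t, W a t • v t) := by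
  rw [Qf_poly, Qf_poly]
  have hsub : (compressPoly p W).support ⊆ p.support := Finsupp.support_mapRange
  have h0 : ∀ w ∈ p.support, w ∉ (compressPoly p W).support →
      (∑ a, ∑ b, (starRingEnd ℂ) ((compressPoly p W) w a b)
        * (inner ℂ ((wordEval T w) (v b)) (v a) : ℂ)) = 0 := by
    intro w _ hw
    rw [Finsupp.notMem_support_iff] at hw
    simp [hw]
  rw [Finset.sum_subset hsub h0]
  refine Finset.sum_congr rfl fun w _ => ?_
  have hcp : (compressPoly p W) w = Wᴴ * p w * W := Finsupp.mapRange_apply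
  rw [hcp]
  exact (Qf_core (p w) (wordEval T w) W v).symm

private lemma Qf_kron {d r : ℕ} (B : Matrix (Fin d) (Fin d) ℂ) (S : H →L[ℂ] H)
    (W : Matrix (Fin d) (Fin r) ℂ) (v : Fin r → H) :
    Qf (kron B S) (fun a => ∑ t, W a t • v t)
      = ∑ s, ∑ t, (starRingEnd ℂ) ((Wᴴ * B * W) s t) * inner ℂ (S (v t)) (v s) := by
  rw [← Qf_core]
  simp only [Qf, kron, Matrix.of_apply, ContinuousLinearMap.smul_apply, inner_smul_left]

end AuxEasyDir

/-- Theorem 3.1, (i) ⇒ (ii): if `p(T) + ∑ Bᵢ ⊗ Sᵢ ≥ 0` for some self-adjoint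
`Sᵢ`, where the `Bᵢ` span an indefinite subspace, then for all `r ≤ dim H` and all `W_j` with
`∑_j W_jᴴ Bᵢ W_j = 0` one has `∑_j p_{W_j}(T) ≥ 0`. -/
theorem free_elimination_easy_direction
    {n d m : ℕ} {H : Type*}
    [NormedAddCommGroup H] [InnerProductSpace ℂ H] [CompleteSpace H]
    (p : FreePoly n d) (hp : p.IsHermitian)
    (B : Fin m → Matrix (Fin d) (Fin d) ℂ) (hBh : ∀ i, (B i).IsHermitian)
    (hind : ∀ M ∈ Submodule.span ℝ (Set.range B), M ≠ 0 →
      ¬ M.PosSemidef ∧ ¬ (-M).PosSemidef)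
    (T : Fin n → H →L[ℂ] H) (hT : ∀ i, IsSelfAdjoint (T i))
    (hex : ∃ S : Fin m → H →L[ℂ] H, (∀ i, IsSelfAdjoint (S i)) ∧
      OpMatNonneg (evalOp p T + ∑ i, kron (B i) (S i))) :
    ∀ (r N : ℕ), (r : Cardinal) ≤ Module.rank ℂ H →
      ∀ W : Fin N → Matrix (Fin d) (Fin r) ℂ,
        (∀ i, ∑ j, (W j)ᴴ * B i * W j = 0) →
        OpMatNonneg (∑ j, evalOp (compressPoly p (W j)) T) := by
  intro r N _ W hW v
  obtain ⟨S, _, hpos⟩ := hex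
  set u : Fin N → Fin d → H := fun j a => ∑ t, W j a t • v t with hu
  -- the kron contribution vanishes after summing over j
  have hk : ∀ i, ∑ j, Qf (kron (B i) (S i)) (u j) = 0 := by
    intro i
    have h1 : ∑ j, Qf (kron (B i) (S i)) (u j)
        = ∑ j, ∑ s, ∑ t, (starRingEnd ℂ) (((W j)ᴴ * B i * W j) s t)
            * inner ℂ (S i (v t)) (v s) :=
      Finset.sum_congr rfl fun j _ => Qf_kron (B i) (S i) (W j) v
    rw [h1, (sum_rot' Finset.univ Finset.univ Finset.univ
      (fun s t j => (starRingEnd ℂ) (((W j)ᴴ * B i * W j) s t)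
        * (inner ℂ (S i (v t)) (v s) : ℂ))).symm]
    refine Finset.sum_eq_zero fun s _ => Finset.sum_eq_zero fun t _ => ?_
    have hz : (∑ j, (starRingEnd ℂ) (((W j)ᴴ * B i * W j) s t)) = 0 := by
      rw [← map_sum, ← Matrix.sum_apply, hW i]
      simp
    rw [← Finset.sum_mul, hz, zero_mul]
  have hK0 : ∑ j, Qf (∑ i, kron (B i) (S i)) (u j) = 0 := by
    have : ∀ j : Fin N, Qf (∑ i, kron (B i) (S i)) (u j)
        = ∑ i, Qf (kron (B i) (S i)) (u j) := fun j => Qf_sum _ _ _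
    simp only [this]
    rw [Finset.sum_comm]
    exact Finset.sum_eq_zero fun i _ => hk i
  have main_eq : ∑ j, Qf (evalOp (compressPoly p (W j)) T) v
      = ∑ j, Qf (evalOp p T + ∑ i, kron (B i) (S i)) (u j) := by
    have h2 : ∀ j : Fin N, Qf (evalOp p T + ∑ i, kron (B i) (S i)) (u j)
        = Qf (evalOp p T) (u j) + Qf (∑ i, kron (B i) (S i)) (u j) :=
      fun j => Qf_add _ _ _
    simp only [h2, Finset.sum_add_distrib, hK0, add_zero]
    exact Finset.sum_congr rfl fun j _ => Qf_compress p T (W j) v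
  have goal_eq : (∑ i, ∑ t, (inner ℂ ((∑ j, evalOp (compressPoly p (W j)) T) i t (v t))
      (v i) : ℂ)) = ∑ j, Qf (evalOp p T + ∑ i, kron (B i) (S i)) (u j) := by
    rw [← main_eq, ← Qf_sum]; rfl
  show 0 ≤ (∑ i, ∑ t, (inner ℂ ((∑ j, evalOp (compressPoly p (W j)) T) i t (v t)) (v i) : ℂ)).re
  rw [goal_eq, Complex.re_sum]
  exact Finset.sum_nonneg fun j _ => hpos (u j)
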